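/- For μ ∈ ℝ and v > 1, the equation N(x)/N_{μ,v}(x) = Φ(x)/Φ_{μ,v}(x) has a unique real solution x = α, and this solution satisfies α > μ/(1-v). Here N and Φ are the density and CDF of the standard normal distribution, and N_{μ,v}, Φ_{μ,v} those of the normal distribution with mean μ and variance v. -/

import Mathlib

noncomputable def normalPDF (μ v x : ℝ) : ℝ :=
  (Real.sqrt (2 * Real.pi * v))⁻¹ * Real.exp (-(x - μ)^2 / (2 * v))

noncomputable def normalCDF (μ v x : ℝ) : ℝ :=
  ∫ t in Set.Iio x, normalPDF μ v t

open Real MeasureTheory Set Filter Topology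

lemma normalPDF_eq_gaussian (μ : ℝ) {v : ℝ} (hv : 0 ≤ v) :
    normalPDF μ v = ProbabilityTheory.gaussianPDFReal μ ⟨v, hv⟩ := by
  ext x
  simp [normalPDF, ProbabilityTheory.gaussianPDFReal, neg_div]
  rfl

lemma normalPDF_pos (μ : ℝ) {v : ℝ} (hv : 0 < v) (x : ℝ) : 0 < normalPDF μ v x := by
  have h2 : (0:ℝ) < 2 * Real.pi * v := by positivity
  have := Real.sqrt_pos.mpr h2
  unfold normalPDF
  positivity

lemma normalPDF_integrable (μ : ℝ) {v : ℝ} (hv : 0 < v) : Integrable (normalPDF μ v) := by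
  rw [normalPDF_eq_gaussian μ hv.le]
  exact ProbabilityTheory.integrable_gaussianPDFReal μ ⟨v, hv.le⟩

lemma normalPDF_integral_eq_one (μ : ℝ) {v : ℝ} (hv : 0 < v) :
    ∫ x, normalPDF μ v x = 1 := by
  rw [normalPDF_eq_gaussian μ hv.le]
  exact ProbabilityTheory.integral_gaussianPDFReal_eq_one μ (by
    intro h
    apply hv.ne'
    exact congrArg NNReal.toReal h)

lemma normalPDF_continuous (μ v : ℝ) : Continuous (normalPDF μ v) := by
  unfold normalPDF
  fun_prop

lemma normalCDF_pos (μ : ℝ) {v : ℝ} (hv : 0 < v) (x : ℝ) : 0 < normalCDF μ v x := by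
  rw [normalCDF]
  rw [setIntegral_pos_iff_support_of_nonneg_ae
    (ae_of_all _ fun t => (normalPDF_pos μ hv t).le)
    ((normalPDF_integrable μ hv).integrableOn)]
  have hsupp : Function.support (normalPDF μ v) ∩ Iio x = Iio x := by
    rw [inter_eq_right]
    intro t _
    exact (normalPDF_pos μ hv t).ne'
  rw [hsupp]
  simp [Real.volume_Iio]

lemma normalCDF_le_one (μ : ℝ) {v : ℝ} (hv : 0 < v) (x : ℝ) : normalCDF μ v x ≤ 1 := by
  rw [normalCDF, ← normalPDF_integral_eq_one μ hv]
  exact setIntegral_le_integral (normalPDF_integrable μ hv)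
    (ae_of_all _ fun t => (normalPDF_pos μ hv t).le)

lemma normalCDF_mono (μ : ℝ) {v : ℝ} (hv : 0 < v) {x y : ℝ} (hxy : x ≤ y) :
    normalCDF μ v x ≤ normalCDF μ v y := by
  apply setIntegral_mono_set ((normalPDF_integrable μ hv).integrableOn)
    (ae_of_all _ fun t => (normalPDF_pos μ hv t).le)
  exact HasSubset.Subset.eventuallyLE (Iio_subset_Iio hxy)

lemma normalCDF_hasDerivAt (μ : ℝ) {v : ℝ} (hv : 0 < v) (x : ℝ) :
    HasDerivAt (normalCDF μ v) (normalPDF μ v x) x := by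
  have hint : Integrable (normalPDF μ v) := normalPDF_integrable μ hv
  have key : ∀ y : ℝ, normalCDF μ v y
      = normalCDF μ v 0 + ∫ t in (0:ℝ)..y, normalPDF μ v t := by
    intro y
    have h1 : normalCDF μ v y = ∫ t in Iic y, normalPDF μ v t := by
      rw [normalCDF]
      exact setIntegral_congr_set Iio_ae_eq_Iic
    have h0 : normalCDF μ v 0 = ∫ t in Iic (0:ℝ), normalPDF μ v t := by
      rw [normalCDF]
      exact setIntegral_congr_set Iio_ae_eq_Iic
    rw [h1, h0, ← intervalIntegral.integral_Iic_sub_Iic hint.integrableOn hint.integrableOn]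
    ring
  have hD : HasDerivAt (fun y => normalCDF μ v 0 + ∫ t in (0:ℝ)..y, normalPDF μ v t)
      (normalPDF μ v x) x := by
    apply HasDerivAt.const_add
    exact intervalIntegral.integral_hasDerivAt_right hint.intervalIntegrable
      (normalPDF_continuous μ v).stronglyMeasurable.stronglyMeasurableAtFilter
      (normalPDF_continuous μ v).continuousAt
  exact hD.congr_of_eventuallyEq (Eventually.of_forall key)

/-- The key auxiliary function: its zeros are the solutions of the equation. -/
noncomputable def Qaux (μ v x : ℝ) : ℝ :=
  normalPDF 0 1 x * normalCDF μ v x - normalPDF μ v x * normalCDF 0 1 x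

lemma normalPDF_hasDerivAt (μ : ℝ) {v : ℝ} (hv : 0 < v) (x : ℝ) :
    HasDerivAt (normalPDF μ v) (normalPDF μ v x * (-(x - μ) / v)) x := by
  have h0 : HasDerivAt (fun x : ℝ => x - μ) 1 x := (hasDerivAt_id x).sub_const μ
  have h1 : HasDerivAt (fun x : ℝ => -(x - μ)^2 / (2*v)) (-(x-μ)/v) x := by
    have h2 : HasDerivAt (fun x : ℝ => -(x - μ)^2 / (2*v)) (-(↑2 * (x - μ) ^ (2 - 1) * 1) / (2 * v)) x := ((h0.pow 2).neg).div_const (2*v)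
    convert h2 using 1
    field_simp
    ring
  have h3 := (h1.exp).const_mul ((Real.sqrt (2*Real.pi*v))⁻¹)
  have hval : normalPDF μ v x * (-(x - μ)/v)
      = (Real.sqrt (2*Real.pi*v))⁻¹ * (Real.exp (-(x - μ)^2 / (2*v)) * (-(x-μ)/v)) := by
    simp only [normalPDF]; ring
  rw [hval]
  exact h3

lemma Qaux_hasDerivAt (μ : ℝ) {v : ℝ} (hv : 0 < v) (x : ℝ) :
    HasDerivAt (Qaux μ v)
      (normalPDF 0 1 x * (-(x - 0)/1) * normalCDF μ v x
        - normalPDF μ v x * (-(x - μ)/v) * normalCDF 0 1 x) x := by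
  have h1 := (normalPDF_hasDerivAt 0 one_pos x).mul (normalCDF_hasDerivAt μ hv x)
  have h2 := (normalPDF_hasDerivAt μ hv x).mul (normalCDF_hasDerivAt 0 one_pos x)
  have h3 := h1.sub h2
  have hfun : Qaux μ v = fun x => normalPDF 0 1 x * normalCDF μ v x
      - normalPDF μ v x * normalCDF 0 1 x := rfl
  rw [hfun]
  exact h3.congr_deriv (by ring)

lemma Qaux_continuous (μ : ℝ) {v : ℝ} (hv : 0 < v) : Continuous (Qaux μ v) := by
  rw [continuous_iff_continuousAt]
  exact fun x => (Qaux_hasDerivAt μ hv x).continuousAt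

/-- pointwise density ratio comparison left of the peak `μ/(1-v)` -/
lemma pdf_ratio_lt (μ : ℝ) {v : ℝ} (hv : 1 < v) {t x : ℝ} (htx : t < x)
    (hx : x ≤ μ / (1 - v)) :
    normalPDF μ v x * normalPDF 0 1 t < normalPDF 0 1 x * normalPDF μ v t := by
  have hv0 : (0:ℝ) < v := by linarith
  have h1v : 1 - v < 0 := by linarith
  have hxμ : μ ≤ (1 - v) * x := by
    have := mul_le_mul_of_nonpos_left hx h1v.le
    rwa [mul_div_cancel₀ μ h1v.ne] at this
  have htμ : μ < (1 - v) * t := by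
    have := mul_lt_mul_of_neg_left htx h1v
    linarith
  have key : -(x - μ)^2 / (2*v) + -(t - 0)^2 / (2*1)
      < -(x - 0)^2 / (2*1) + -(t - μ)^2 / (2*v) := by
    rw [← sub_pos]
    have heq : -(x - 0)^2 / (2*1) + -(t - μ)^2 / (2*v)
        - (-(x - μ)^2 / (2*v) + -(t - 0)^2 / (2*1))
        = (x - t) * ((1 - v)*(x + t) - 2*μ) / (2*v) := by
      field_simp
      ring
    rw [heq]
    apply div_pos _ (by linarith)
    apply mul_pos (by linarith)
    nlinarith
  calc normalPDF μ v x * normalPDF 0 1 t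
      = (Real.sqrt (2*Real.pi*v))⁻¹ * (Real.sqrt (2*Real.pi*1))⁻¹
        * Real.exp (-(x - μ)^2 / (2*v) + -(t - 0)^2 / (2*1)) := by
        rw [normalPDF, normalPDF, Real.exp_add]; ring
    _ < (Real.sqrt (2*Real.pi*v))⁻¹ * (Real.sqrt (2*Real.pi*1))⁻¹
        * Real.exp (-(x - 0)^2 / (2*1) + -(t - μ)^2 / (2*v)) := by
        have hc : (0:ℝ) < (Real.sqrt (2*Real.pi*v))⁻¹ * (Real.sqrt (2*Real.pi*1))⁻¹ := by
          have h2 : (0:ℝ) < 2 * Real.pi * v := by positivity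
          have h3 : (0:ℝ) < 2 * Real.pi * 1 := by positivity
          have := Real.sqrt_pos.mpr h2
          have := Real.sqrt_pos.mpr h3
          positivity
        exact mul_lt_mul_of_pos_left (Real.exp_lt_exp.mpr key) hc
    _ = normalPDF 0 1 x * normalPDF μ v t := by
        rw [normalPDF, normalPDF, Real.exp_add]; ring

lemma Qaux_pos_of_le (μ : ℝ) {v : ℝ} (hv : 1 < v) {x : ℝ} (hx : x ≤ μ / (1 - v)) :
    0 < Qaux μ v x := by
  have hv0 : (0:ℝ) < v := by linarith
  rw [Qaux, sub_pos]
  have hint1 : Integrable (fun t => normalPDF 0 1 x * normalPDF μ v t) :=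
    (normalPDF_integrable μ hv0).const_mul _
  have hint2 : Integrable (fun t => normalPDF μ v x * normalPDF 0 1 t) :=
    (normalPDF_integrable 0 one_pos).const_mul _
  have hposint : 0 < ∫ t in Iio x,
      (normalPDF 0 1 x * normalPDF μ v t - normalPDF μ v x * normalPDF 0 1 t) := by
    rw [setIntegral_pos_iff_support_of_nonneg_ae]
    · have hsupp : Iio x ⊆ Function.support
          (fun t => normalPDF 0 1 x * normalPDF μ v t - normalPDF μ v x * normalPDF 0 1 t) := by
        intro t ht
        exact ne_of_gt (sub_pos.mpr (pdf_ratio_lt μ hv ht hx))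
      refine lt_of_lt_of_le ?_ (measure_mono (subset_inter hsupp subset_rfl))
      simp [Real.volume_Iio]
    · rw [EventuallyLE, ae_restrict_iff' measurableSet_Iio]
      exact ae_of_all _ fun t ht => (sub_pos.mpr (pdf_ratio_lt μ hv ht hx)).le
    · exact (hint1.sub hint2).integrableOn
  rw [integral_sub hint1.integrableOn hint2.integrableOn,
    integral_const_mul, integral_const_mul, sub_pos] at hposint
  exact hposint

lemma Qaux_deriv_neg (μ : ℝ) {v : ℝ} (hv : 1 < v) {z : ℝ} (hz : Qaux μ v z = 0)
    (hzgt : μ / (1 - v) < z) :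
    normalPDF 0 1 z * (-(z - 0)/1) * normalCDF μ v z
      - normalPDF μ v z * (-(z - μ)/v) * normalCDF 0 1 z < 0 := by
  have hv0 : (0:ℝ) < v := by linarith
  have h1v : 1 - v < 0 := by linarith
  have hP : 0 < normalPDF 0 1 z * normalCDF μ v z :=
    mul_pos (normalPDF_pos 0 one_pos z) (normalCDF_pos μ hv0 z)
  have hzz : (1 - v) * z < μ := by
    have := mul_lt_mul_of_neg_left hzgt h1v
    rwa [mul_div_cancel₀ μ h1v.ne] at this
  have heq : normalPDF μ v z * normalCDF 0 1 z = normalPDF 0 1 z * normalCDF μ v z := by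
    rw [Qaux, sub_eq_zero] at hz
    exact hz.symm
  have hrw : normalPDF 0 1 z * (-(z - 0)/1) * normalCDF μ v z
      - normalPDF μ v z * (-(z - μ)/v) * normalCDF 0 1 z
      = (normalPDF 0 1 z * normalCDF μ v z) * (((1 - v)*z - μ)/v) := by
    rw [mul_comm (normalPDF μ v z * (-(z - μ)/v)) (normalCDF 0 1 z), ← mul_assoc,
      mul_comm (normalCDF 0 1 z) (normalPDF μ v z), heq]
    field_simp
    ring
  rw [hrw]
  exact mul_neg_of_pos_of_neg hP (div_neg_of_neg_of_pos (by linarith) hv0)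

lemma eventually_pos_left {Q : ℝ → ℝ} {z D : ℝ} (hQ : HasDerivAt Q D z) (hz : Q z = 0)
    (hD : D < 0) : ∀ᶠ x in nhdsWithin z (Iio z), 0 < Q x := by
  have h := hasDerivAt_iff_tendsto_slope.mp hQ
  have hev : ∀ᶠ x in nhdsWithin z {z}ᶜ, slope Q z x < 0 := h.eventually_lt_const hD
  have hmono : nhdsWithin z (Iio z) ≤ nhdsWithin z {z}ᶜ :=
    nhdsWithin_mono z fun x hx => ne_of_lt hx
  filter_upwards [hmono hev, self_mem_nhdsWithin] with x hx hx'
  rw [slope_def_field] at hx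
  have hxz : x - z < 0 := sub_neg.mpr hx'
  rw [div_lt_iff_of_neg hxz] at hx
  simp only [hz, sub_zero] at hx ⊢
  linarith [hx]

lemma eventually_neg_right {Q : ℝ → ℝ} {z D : ℝ} (hQ : HasDerivAt Q D z) (hz : Q z = 0)
    (hD : D < 0) : ∀ᶠ x in nhdsWithin z (Ioi z), Q x < 0 := by
  have h := hasDerivAt_iff_tendsto_slope.mp hQ
  have hev : ∀ᶠ x in nhdsWithin z {z}ᶜ, slope Q z x < 0 := h.eventually_lt_const hD
  have hmono : nhdsWithin z (Ioi z) ≤ nhdsWithin z {z}ᶜ :=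
    nhdsWithin_mono z fun x hx => ne_of_gt hx
  filter_upwards [hmono hev, self_mem_nhdsWithin] with x hx hx'
  rw [slope_def_field] at hx
  have hxz : 0 < x - z := sub_pos.mpr hx'
  rw [div_lt_iff₀ hxz] at hx
  simp only [hz, sub_zero] at hx ⊢
  linarith [hx]

lemma Qaux_deriv_neg' (μ : ℝ) {v : ℝ} (hv : 1 < v) {z : ℝ} (hz : Qaux μ v z = 0) :
    ∃ D : ℝ, HasDerivAt (Qaux μ v) D z ∧ D < 0 := by
  have hv0 : (0:ℝ) < v := by linarith
  have hzgt : μ / (1 - v) < z := by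
    by_contra h
    exact (Qaux_pos_of_le μ hv (not_lt.mp h)).ne' hz
  exact ⟨_, Qaux_hasDerivAt μ hv0 z, Qaux_deriv_neg μ hv hz hzgt⟩

lemma Qaux_two_zeros_false (μ : ℝ) {v : ℝ} (hv : 1 < v) {z₁ z₂ : ℝ}
    (h1 : Qaux μ v z₁ = 0) (h2 : Qaux μ v z₂ = 0) (hlt : z₁ < z₂) : False := by
  have hv0 : (0:ℝ) < v := by linarith
  have hQcont := Qaux_continuous μ hv0
  obtain ⟨D₂, hD₂, hD₂neg⟩ := Qaux_deriv_neg' μ hv h2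
  obtain ⟨D₁, hD₁, hD₁neg⟩ := Qaux_deriv_neg' μ hv h1
  -- find b ∈ (z₁, z₂) with Q b > 0
  obtain ⟨b, hQb, hb⟩ := ((eventually_pos_left hD₂ h2 hD₂neg).and
    (show ∀ᶠ x in nhdsWithin z₂ (Iio z₂), x ∈ Ioo z₁ z₂ from
      Ioo_mem_nhdsLT_of_mem ⟨hlt, le_rfl⟩)).exists
  -- find a ∈ (z₁, b) with Q a < 0
  obtain ⟨a, hQa, ha⟩ := ((eventually_neg_right hD₁ h1 hD₁neg).and
    (show ∀ᶠ x in nhdsWithin z₁ (Ioi z₁), x ∈ Ioo z₁ b from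
      Ioo_mem_nhdsGT_of_mem ⟨le_rfl, hb.1⟩)).exists
  have hab : a < b := ha.2
  -- the zero set of Q in [a, b]
  set S : Set ℝ := Icc a b ∩ {x | Qaux μ v x = 0} with hS
  have hSclosed : IsClosed S :=
    isClosed_Icc.inter (isClosed_singleton.preimage hQcont)
  obtain ⟨w, hwmem, hw0⟩ := intermediate_value_Icc hab.le hQcont.continuousOn
    (show (0:ℝ) ∈ Icc (Qaux μ v a) (Qaux μ v b) from ⟨hQa.le, hQb.le⟩)
  have hSne : S.Nonempty := ⟨w, hwmem, hw0⟩
  have hSbdd : BddBelow S := ⟨a, fun y hy => hy.1.1⟩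
  set z := sInf S with hzdef
  have hzS : z ∈ S := hSclosed.csInf_mem hSne hSbdd
  have haz : a < z := lt_of_le_of_ne hzS.1.1 (by
    intro h
    rw [← h] at hzS
    exact hQa.ne hzS.2)
  obtain ⟨Dz, hDz, hDzneg⟩ := Qaux_deriv_neg' μ hv hzS.2
  obtain ⟨y, hQy, hy⟩ := ((eventually_pos_left hDz hzS.2 hDzneg).and
    (show ∀ᶠ x in nhdsWithin z (Iio z), x ∈ Ioo a z from
      Ioo_mem_nhdsLT_of_mem ⟨haz, le_rfl⟩)).exists
  obtain ⟨w', hw'mem, hw'0⟩ := intermediate_value_Icc hy.1.le hQcont.continuousOn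
    (show (0:ℝ) ∈ Icc (Qaux μ v a) (Qaux μ v y) from ⟨hQa.le, hQy.le⟩)
  have hw'S : w' ∈ S :=
    ⟨⟨hw'mem.1, hw'mem.2.trans (hy.2.le.trans hzS.1.2)⟩, hw'0⟩
  have h1 : z ≤ w' := csInf_le hSbdd hw'S
  have h2 : w' < z := lt_of_le_of_lt hw'mem.2 hy.2
  linarith

lemma Qaux_exists_neg (μ : ℝ) {v : ℝ} (hv : 1 < v) :
    ∃ X : ℝ, μ / (1 - v) < X ∧ Qaux μ v X < 0 := by
  have hv0 : (0:ℝ) < v := by linarith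
  set c := normalCDF 0 1 0 with hc
  have hcpos : 0 < c := normalCDF_pos 0 one_pos 0
  set K := (Real.sqrt (2*Real.pi*1))⁻¹ / (Real.sqrt (2*Real.pi*v))⁻¹ with hK
  set e : ℝ → ℝ := fun X => -(X - 0)^2/(2*1) - -(X - μ)^2/(2*v) with he
  have hrat : ∀ X, normalPDF 0 1 X / normalPDF μ v X = K * Real.exp (e X) := by
    intro X
    rw [normalPDF, normalPDF, mul_div_mul_comm, ← Real.exp_sub]
  have htends : Tendsto (fun X => K * Real.exp (e X)) atTop (𝓝 (K * 0)) := by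
    apply Tendsto.const_mul
    apply Real.tendsto_exp_atBot.comp
    have heq : e = fun X => X * ((1/(2*v) - 1/2) * X + (-μ/v)) + μ^2/(2*v) := by
      funext X
      simp only [he]
      field_simp
      ring
    rw [heq]
    apply tendsto_atBot_add_const_right
    apply Tendsto.atTop_mul_atBot₀ tendsto_id
    apply tendsto_atBot_add_const_right
    have hneg : 1/(2*v) - 1/2 < 0 := by
      rw [sub_neg, div_lt_div_iff₀ (by linarith) (by norm_num)]
      linarith
    exact (tendsto_const_mul_atBot_of_neg hneg).mpr tendsto_id
  rw [mul_zero] at htends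
  obtain ⟨X, ⟨hX0, hXgt⟩, hXlt⟩ := (((eventually_ge_atTop (0:ℝ)).and
    (eventually_gt_atTop (μ/(1-v)))).and (htends.eventually_lt_const hcpos)).exists
  refine ⟨X, hXgt, ?_⟩
  rw [← hrat X, div_lt_iff₀ (normalPDF_pos μ hv0 X)] at hXlt
  have h1 : normalCDF μ v X ≤ 1 := normalCDF_le_one μ hv0 X
  have h2 : c ≤ normalCDF 0 1 X := normalCDF_mono 0 one_pos hX0
  have hp1 : 0 < normalPDF 0 1 X := normalPDF_pos 0 one_pos X
  have hpv : 0 < normalPDF μ v X := normalPDF_pos μ hv0 X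
  rw [Qaux, sub_neg]
  calc normalPDF 0 1 X * normalCDF μ v X ≤ normalPDF 0 1 X * 1 :=
        mul_le_mul_of_nonneg_left h1 hp1.le
    _ < normalPDF μ v X * normalCDF 0 1 X := by
        rw [mul_one]
        calc normalPDF 0 1 X < c * normalPDF μ v X := hXlt
          _ ≤ normalPDF μ v X * normalCDF 0 1 X := by
              rw [mul_comm]
              exact mul_le_mul_of_nonneg_left h2 hpv.le

theorem stmt1 (μ v : ℝ) (hv : 1 < v) :
    ∃ α : ℝ, α > μ / (1 - v) ∧
      normalPDF 0 1 α / normalPDF μ v α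
        = normalCDF 0 1 α / normalCDF μ v α ∧
      ∀ x : ℝ, normalPDF 0 1 x / normalPDF μ v x
        = normalCDF 0 1 x / normalCDF μ v x → x = α := by
  have hv0 : (0:ℝ) < v := by linarith
  have hiff : ∀ x : ℝ, (normalPDF 0 1 x / normalPDF μ v x
      = normalCDF 0 1 x / normalCDF μ v x) ↔ Qaux μ v x = 0 := by
    intro x
    rw [div_eq_div_iff (normalPDF_pos μ hv0 x).ne' (normalCDF_pos μ hv0 x).ne', Qaux,
      sub_eq_zero]
    constructor <;> intro h <;> linear_combination h
  obtain ⟨X, hXgt, hXneg⟩ := Qaux_exists_neg μ hv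
  have hQx₀ : 0 < Qaux μ v (μ/(1-v)) := Qaux_pos_of_le μ hv le_rfl
  obtain ⟨α, hαmem, hα0⟩ := intermediate_value_Icc' hXgt.le
    (Qaux_continuous μ hv0).continuousOn
    (show (0:ℝ) ∈ Icc (Qaux μ v X) (Qaux μ v (μ/(1-v))) from ⟨hXneg.le, hQx₀.le⟩)
  have hαgt : μ/(1-v) < α :=
    lt_of_le_of_ne hαmem.1 (fun h => (Qaux_pos_of_le μ hv h.ge).ne' hα0)
  refine ⟨α, hαgt, (hiff α).mpr hα0, fun x hx => ?_⟩
  have hx0 : Qaux μ v x = 0 := (hiff x).mp hx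
  rcases lt_trichotomy x α with h | h | h
  · exact (Qaux_two_zeros_false μ hv hx0 hα0 h).elim
  · exact h
  · exact (Qaux_two_zeros_false μ hv hα0 hx0 h).elim
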